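/- For n = 2, the Hausdorff pseudo-distance equals the symmetrized pseudo-distance: dist_H(a,b) = dist_S(a,b) for all a, b ∈ R^{2d}. -/

import Mathlib

open Metric EMetric

lemma infDist_pair' {X : Type*} [MetricSpace X] (x u v : X) :
    Metric.infDist x {u, v} = min (dist x u) (dist x v) := by
  have : ({u, v} : Set X) = {u} ∪ {v} := rfl
  rw [Metric.infDist, this, EMetric.infEdist_union, EMetric.infEdist_singleton,
    EMetric.infEdist_singleton,
    ENNReal.toReal_min (edist_ne_top _ _) (edist_ne_top _ _), dist_edist, dist_edist]

lemma quad_min {p q r s h : ℝ} (h1 : min p q ≤ h) (h2 : min r s ≤ h)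
    (h3 : min p r ≤ h) (h4 : min q s ≤ h) :
    min (max p s) (max q r) ≤ h := by
  rcases min_le_iff.mp h1 with hp | hq <;> rcases min_le_iff.mp h2 with hr | hs
  · rcases min_le_iff.mp h4 with hq | hs
    · exact min_le_of_right_le (max_le hq hr)
    · exact min_le_of_left_le (max_le hp hs)
  · exact min_le_of_left_le (max_le hp hs)
  · exact min_le_of_right_le (max_le hq hr)
  · rcases min_le_iff.mp h3 with hp | hr
    · exact min_le_of_left_le (max_le hp hs)
    · exact min_le_of_right_le (max_le hq hr)

/-- For two particles (`n = 2`), the Hausdorff pseudo-distance between the coordinate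
sets `{a 0, a 1}` and `{b 0, b 1}` (with the sup-norm on `ℝ^d`) equals the symmetrized
pseudo-distance
`min (max ‖a 0 - b 0‖ ‖a 1 - b 1‖) (max ‖a 1 - b 0‖ ‖a 0 - b 1‖)`. -/
theorem hausdorff_eq_distS_two_particles {d : ℕ} (a b : Fin 2 → Fin d → ℝ) :
    Metric.hausdorffDist (Set.range a) (Set.range b)
      = min (max ‖a 0 - b 0‖ ‖a 1 - b 1‖) (max ‖a 1 - b 0‖ ‖a 0 - b 1‖) := by
  have ra : Set.range a = {a 0, a 1} := by
    ext x
    simp [Set.range, Fin.exists_fin_two, or_comm, eq_comm]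
  have rb : Set.range b = {b 0, b 1} := by
    ext x
    simp [Set.range, Fin.exists_fin_two, or_comm, eq_comm]
  rw [ra, rb]
  have hA : ({a 0, a 1} : Set (Fin d → ℝ)).Nonempty := ⟨a 0, Or.inl rfl⟩
  have hB : ({b 0, b 1} : Set (Fin d → ℝ)).Nonempty := ⟨b 0, Or.inl rfl⟩
  have hAb : Bornology.IsBounded ({a 0, a 1} : Set (Fin d → ℝ)) :=
    ((Set.finite_singleton _).insert _).isBounded
  have hBb : Bornology.IsBounded ({b 0, b 1} : Set (Fin d → ℝ)) :=
    ((Set.finite_singleton _).insert _).isBounded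
  have hfin : EMetric.hausdorffEdist ({a 0, a 1} : Set (Fin d → ℝ)) {b 0, b 1} ≠ ⊤ :=
    Metric.hausdorffEdist_ne_top_of_nonempty_of_bounded hA hB hAb hBb
  set p := ‖a 0 - b 0‖
  set q := ‖a 0 - b 1‖
  set r := ‖a 1 - b 0‖
  set s := ‖a 1 - b 1‖
  have dp : dist (a 0) (b 0) = p := dist_eq_norm _ _
  have dq : dist (a 0) (b 1) = q := dist_eq_norm _ _
  have dr : dist (a 1) (b 0) = r := dist_eq_norm _ _
  have ds : dist (a 1) (b 1) = s := dist_eq_norm _ _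
  apply le_antisymm
  · -- upper bound
    apply le_min
    · apply Metric.hausdorffDist_le_of_mem_dist (le_max_of_le_left (norm_nonneg _))
      · rintro x (rfl | rfl)
        · exact ⟨b 0, Or.inl rfl, dp ▸ le_max_left _ _⟩
        · exact ⟨b 1, Or.inr rfl, ds ▸ le_max_right _ _⟩
      · rintro x (rfl | rfl)
        · exact ⟨a 0, Or.inl rfl, by rw [dist_comm, dp]; exact le_max_left _ _⟩
        · exact ⟨a 1, Or.inr rfl, by rw [dist_comm, ds]; exact le_max_right _ _⟩
    · apply Metric.hausdorffDist_le_of_mem_dist (le_max_of_le_left (norm_nonneg _))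
      · rintro x (rfl | rfl)
        · exact ⟨b 1, Or.inr rfl, dq ▸ le_max_right _ _⟩
        · exact ⟨b 0, Or.inl rfl, dr ▸ le_max_left _ _⟩
      · rintro x (rfl | rfl)
        · exact ⟨a 1, Or.inr rfl, by rw [dist_comm, dr]; exact le_max_left _ _⟩
        · exact ⟨a 0, Or.inl rfl, by rw [dist_comm, dq]; exact le_max_right _ _⟩
  · -- lower bound
    have h1 : min p q ≤ Metric.hausdorffDist ({a 0, a 1} : Set (Fin d → ℝ)) {b 0, b 1} := by
      have := Metric.infDist_le_hausdorffDist_of_mem (x := a 0)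
        (Or.inl rfl : a 0 ∈ ({a 0, a 1} : Set (Fin d → ℝ))) hfin
      rwa [infDist_pair', dp, dq] at this
    have h2 : min r s ≤ Metric.hausdorffDist ({a 0, a 1} : Set (Fin d → ℝ)) {b 0, b 1} := by
      have := Metric.infDist_le_hausdorffDist_of_mem (x := a 1)
        (Or.inr rfl : a 1 ∈ ({a 0, a 1} : Set (Fin d → ℝ))) hfin
      rwa [infDist_pair', dr, ds] at this
    have hfin' : EMetric.hausdorffEdist ({b 0, b 1} : Set (Fin d → ℝ)) {a 0, a 1} ≠ ⊤ := by
      rwa [EMetric.hausdorffEdist, Metric.hausdorffEDist_comm]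
    have h3 : min p r ≤ Metric.hausdorffDist ({a 0, a 1} : Set (Fin d → ℝ)) {b 0, b 1} := by
      have := Metric.infDist_le_hausdorffDist_of_mem (x := b 0)
        (Or.inl rfl : b 0 ∈ ({b 0, b 1} : Set (Fin d → ℝ))) hfin'
      rw [infDist_pair', dist_comm (b 0) (a 0), dist_comm (b 0) (a 1), dp, dr,
        Metric.hausdorffDist_comm] at this
      exact this
    have h4 : min q s ≤ Metric.hausdorffDist ({a 0, a 1} : Set (Fin d → ℝ)) {b 0, b 1} := by
      have := Metric.infDist_le_hausdorffDist_of_mem (x := b 1)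
        (Or.inr rfl : b 1 ∈ ({b 0, b 1} : Set (Fin d → ℝ))) hfin'
      rw [infDist_pair', dist_comm (b 1) (a 0), dist_comm (b 1) (a 1), dq, ds,
        Metric.hausdorffDist_comm] at this
      exact this
    rw [max_comm r q]
    exact quad_min h1 h2 h3 h4
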